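/- In the probabilistic densification step after s insertions, the probability that a fixed pixel x* is selected equals ∑_{β=1}^{α} (1/β) · C(N_eq − 1, β − 1) · C(N_gt, α − β) / C(N − s, α), where N_eq is the number of free pixels with energy equal to E(x*) and N_gt the number with strictly greater energy. -/
import Mathlib


/-- Probabilistic densification selection probability.  After `s` insertions the
free pixels form the finset `F` with `F.card = N - s`.  A candidate set of `α`
distinct pixels is drawn uniformly among the `(N-s).choose α` subsets of `F` of
cardinality `α`; among the candidates, those minimizing the energy `E` form the
set of minimizers, and the selected pixel is chosen uniformly from it.  The
probability that the fixed minimal-energy pixel `x*` is selected equals the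
stated sum. -/
theorem densification_selection_probability
    (N s α : ℕ) (hs : s < N) (hα1 : 1 ≤ α) (hα2 : α ≤ N - s)
    (F : Finset (Fin N)) (hF : F.card = N - s)
    (E : Fin N → ℝ) (xstar : Fin N) (hx : xstar ∈ F)
    (hmin : ∀ x ∈ F, E xstar ≤ E x)
    (Neq Ngt : ℕ)
    (hNeq : Neq = (F.filter (fun x => E x = E xstar)).card)
    (hNgt : Ngt = (F.filter (fun x => E xstar < E x)).card) :
    (∑ S ∈ F.powersetCard α,
        (if xstar ∈ S then
            (1 : ℝ) / ((S.filter (fun x => E x = E xstar)).card : ℝ)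
          else 0)) / (((N - s).choose α : ℕ) : ℝ)
      = ∑ β ∈ Finset.Icc 1 α,
          (1 / (β : ℝ)) * ((Neq - 1).choose (β - 1) : ℝ) * (Ngt.choose (α - β) : ℝ)
            / (((N - s).choose α : ℕ) : ℝ) := by
  classical
  have hdico : ∀ x ∈ F, E x = E xstar ∨ E xstar < E x := by
    intro x hxF
    rcases lt_or_eq_of_le (hmin x hxF) with h | h
    · exact Or.inr h
    · exact Or.inl h.symm
  have hnot : ∀ x : Fin N, E x = E xstar → ¬ E xstar < E x := by
    intro x h; rw [h]; exact lt_irrefl _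
  rw [← Finset.sum_div]
  congr 1
  rw [← Finset.sum_filter]
  have hmaps : ∀ S ∈ (F.powersetCard α).filter (fun S => xstar ∈ S),
      (S.filter (fun x => E x = E xstar)).card ∈ Finset.Icc 1 α := by
    intro S hS
    simp only [Finset.mem_filter, Finset.mem_powersetCard] at hS
    obtain ⟨⟨hSF, hScard⟩, hxS⟩ := hS
    refine Finset.mem_Icc.mpr ⟨?_, ?_⟩
    · exact Finset.card_pos.mpr ⟨xstar, Finset.mem_filter.mpr ⟨hxS, rfl⟩⟩
    · calc (S.filter (fun x => E x = E xstar)).card ≤ S.card := Finset.card_filter_le _ _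
        _ = α := hScard
  rw [← Finset.sum_fiberwise_of_maps_to hmaps]
  refine Finset.sum_congr rfl ?_
  intro β hβ
  rw [Finset.mem_Icc] at hβ
  rw [Finset.filter_filter]
  have hsum : ∀ S ∈ (F.powersetCard α).filter
      (fun S => xstar ∈ S ∧ (S.filter (fun x => E x = E xstar)).card = β),
      (1:ℝ) / ((S.filter (fun x => E x = E xstar)).card : ℝ) = 1 / (β : ℝ) := by
    intro S hS
    rw [(Finset.mem_filter.mp hS).2.2]
  rw [Finset.sum_congr rfl hsum, Finset.sum_const, nsmul_eq_mul]
  have hxeq : xstar ∈ F.filter (fun x => E x = E xstar) :=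
    Finset.mem_filter.mpr ⟨hx, rfl⟩
  have hcard : ((F.powersetCard α).filter
      (fun S => xstar ∈ S ∧ (S.filter (fun x => E x = E xstar)).card = β)).card
      = (Neq - 1).choose (β - 1) * Ngt.choose (α - β) := by
    have key : ((F.powersetCard α).filter
        (fun S => xstar ∈ S ∧ (S.filter (fun x => E x = E xstar)).card = β)).card
        = ((((F.filter (fun x => E x = E xstar)).erase xstar).powersetCard (β - 1)) ×ˢ
            ((F.filter (fun x => E xstar < E x)).powersetCard (α - β))).card := by
      refine Finset.card_bij'
        (fun S _ => ((S.filter (fun x => E x = E xstar)).erase xstar,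
                     S.filter (fun x => E xstar < E x)))
        (fun p _ => insert xstar (p.1 ∪ p.2)) ?_ ?_ ?_ ?_
      · -- hi
        intro S hS
        simp only [Finset.mem_filter, Finset.mem_powersetCard] at hS
        obtain ⟨⟨hSF, hScard⟩, hxS, hβS⟩ := hS
        have hQeq : S.filter (fun x => E xstar < E x)
            = S.filter (fun x => ¬ E x = E xstar) := by
          ext x
          simp only [Finset.mem_filter, and_congr_right_iff]
          intro hxSm
          constructor
          · intro h he; exact hnot x he h
          · intro h; rcases hdico x (hSF hxSm) with h' | h'
            · exact absurd h' h
            · exact h'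
        refine Finset.mk_mem_product ?_ ?_
        · refine Finset.mem_powersetCard.mpr ⟨?_, ?_⟩
          · exact Finset.erase_subset_erase _ (Finset.filter_subset_filter _ hSF)
          · have hxm : xstar ∈ S.filter (fun x => E x = E xstar) :=
              Finset.mem_filter.mpr ⟨hxS, rfl⟩
            rw [Finset.card_erase_of_mem hxm, hβS]
        · refine Finset.mem_powersetCard.mpr ⟨Finset.filter_subset_filter _ hSF, ?_⟩
          rw [hQeq]
          have := Finset.card_filter_add_card_filter_not
            (s := S) (p := fun x => E x = E xstar)
          omega
      · -- hj
        intro p hp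
        obtain ⟨hA, hB⟩ := Finset.mem_product.mp hp
        rw [Finset.mem_powersetCard] at hA hB
        obtain ⟨hA1, hA2⟩ := hA
        obtain ⟨hB1, hB2⟩ := hB
        have hxA : xstar ∉ p.1 := fun h => Finset.notMem_erase _ _ (hA1 h)
        have hxB : xstar ∉ p.2 := by
          intro h
          exact lt_irrefl _ (Finset.mem_filter.mp (hB1 h)).2
        have hAP : ∀ x ∈ p.1, E x = E xstar := by
          intro x hxp
          exact (Finset.mem_filter.mp (Finset.mem_of_mem_erase (hA1 hxp))).2
        have hBQ : ∀ x ∈ p.2, E xstar < E x := by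
          intro x hxp
          exact (Finset.mem_filter.mp (hB1 hxp)).2
        have hABdisj : Disjoint p.1 p.2 := by
          rw [Finset.disjoint_left]
          intro x hx1 hx2
          exact hnot x (hAP x hx1) (hBQ x hx2)
        have hfilt : (insert xstar (p.1 ∪ p.2)).filter (fun x => E x = E xstar)
            = insert xstar p.1 := by
          ext x
          simp only [Finset.mem_filter, Finset.mem_insert, Finset.mem_union]
          constructor
          · rintro ⟨h1 | h1 | h1, h2⟩
            · exact Or.inl h1
            · exact Or.inr h1
            · exact absurd h2 (fun he => hnot x he (hBQ x h1))
          · rintro (h | h)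
            · subst h; exact ⟨Or.inl rfl, rfl⟩
            · exact ⟨Or.inr (Or.inl h), hAP x h⟩
        refine Finset.mem_filter.mpr ⟨?_, Finset.mem_insert_self _ _, ?_⟩
        · refine Finset.mem_powersetCard.mpr ⟨?_, ?_⟩
          · intro x hxm
            rcases Finset.mem_insert.mp hxm with h | h
            · subst h; exact hx
            · rcases Finset.mem_union.mp h with h | h
              · exact (Finset.filter_subset _ _) (Finset.mem_of_mem_erase (hA1 h))
              · exact (Finset.filter_subset _ _) (hB1 h)
          · rw [Finset.card_insert_of_notMem (by
                simp only [Finset.mem_union, not_or]; exact ⟨hxA, hxB⟩),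
              Finset.card_union_of_disjoint hABdisj, hA2, hB2]
            omega
        · rw [hfilt, Finset.card_insert_of_notMem hxA, hA2]
          omega
      · -- left inverse
        intro S hS
        simp only [Finset.mem_filter, Finset.mem_powersetCard] at hS
        obtain ⟨⟨hSF, hScard⟩, hxS, hβS⟩ := hS
        ext x
        simp only [Finset.mem_insert, Finset.mem_union, Finset.mem_erase,
          Finset.mem_filter]
        constructor
        · rintro (h | ⟨hne, hxm, _⟩ | ⟨hxm, _⟩)
          · subst h; exact hxS
          · exact hxm
          · exact hxm
        · intro hxm
          rcases hdico x (hSF hxm) with h | h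
          · by_cases hxe : x = xstar
            · exact Or.inl hxe
            · exact Or.inr (Or.inl ⟨hxe, hxm, h⟩)
          · exact Or.inr (Or.inr ⟨hxm, h⟩)
      · -- right inverse
        intro p hp
        obtain ⟨hA, hB⟩ := Finset.mem_product.mp hp
        rw [Finset.mem_powersetCard] at hA hB
        obtain ⟨hA1, hA2⟩ := hA
        obtain ⟨hB1, hB2⟩ := hB
        have hxA : xstar ∉ p.1 := fun h => Finset.notMem_erase _ _ (hA1 h)
        have hxB : xstar ∉ p.2 := by
          intro h
          exact lt_irrefl _ (Finset.mem_filter.mp (hB1 h)).2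
        have hAP : ∀ x ∈ p.1, E x = E xstar := by
          intro x hxp
          exact (Finset.mem_filter.mp (Finset.mem_of_mem_erase (hA1 hxp))).2
        have hBQ : ∀ x ∈ p.2, E xstar < E x := by
          intro x hxp
          exact (Finset.mem_filter.mp (hB1 hxp)).2
        have h1 : (insert xstar (p.1 ∪ p.2)).filter (fun x => E x = E xstar)
            = insert xstar p.1 := by
          ext x
          simp only [Finset.mem_filter, Finset.mem_insert, Finset.mem_union]
          constructor
          · rintro ⟨h1 | h1 | h1, h2⟩
            · exact Or.inl h1
            · exact Or.inr h1
            · exact absurd h2 (fun he => hnot x he (hBQ x h1))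
          · rintro (h | h)
            · subst h; exact ⟨Or.inl rfl, rfl⟩
            · exact ⟨Or.inr (Or.inl h), hAP x h⟩
        have h2 : (insert xstar (p.1 ∪ p.2)).filter (fun x => E xstar < E x)
            = p.2 := by
          ext x
          simp only [Finset.mem_filter, Finset.mem_insert, Finset.mem_union]
          constructor
          · rintro ⟨h1 | h1 | h1, hq⟩
            · subst h1; exact absurd hq (lt_irrefl _)
            · exact absurd hq (hnot x (hAP x h1))
            · exact h1
          · intro h
            exact ⟨Or.inr (Or.inr h), hBQ x h⟩
        simp only [h1, h2, Finset.erase_insert hxA]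
    rw [key, Finset.card_product, Finset.card_powersetCard, Finset.card_powersetCard,
      Finset.card_erase_of_mem hxeq, ← hNeq, ← hNgt]
  rw [hcard]
  push_cast
  ring
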